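/- Universal property of the GNS construction (object-level adjunction): Let A be a unital C*-algebra, ω a state on A, and (π, H, Ω) a pointed representation of A. Then there exists a bounded linear map L : H_ω → H satisfying L ∘ π_ω(a) = π(a) ∘ L for all a ∈ A, L([1_A]) = Ω, and L⋆ ∘ L = id (i.e. a morphism of pointed representations from the GNS representation (π_ω, H_ω, [1_A]) to (π, H, Ω)) if and only if ω(a) = ⟨Ω, π(a) Ω⟩ for all a ∈ A; moreover, when such a map exists it is unique. -/

import Mathlib

open scoped ComplexOrder InnerProductSpace

/-- A state on a unital C*-algebra `A`. -/
def IsState {A : Type*} [CStarAlgebra A] (ω : A →L[ℂ] ℂ) : Prop :=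
  ω 1 = 1 ∧ ∀ a : A, 0 ≤ ω (star a * a)

theorem gns_universal_property {A : Type*} [CStarAlgebra A]
    (ω : A →L[ℂ] ℂ) (hω : IsState ω)
    -- GNS data for ω
    {Hω : Type*} [NormedAddCommGroup Hω] [InnerProductSpace ℂ Hω] [CompleteSpace Hω]
    (q : A →ₗ[ℂ] Hω) (hq : DenseRange q)
    (hinner : ∀ a b : A, ⟪q b, q a⟫_ℂ = ω (star b * a))
    (πω : A →⋆ₐ[ℂ] (Hω →L[ℂ] Hω)) (hπω : ∀ a b : A, πω a (q b) = q (a * b))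
    -- a pointed representation of A
    {H : Type*} [NormedAddCommGroup H] [InnerProductSpace ℂ H] [CompleteSpace H]
    (π : A →⋆ₐ[ℂ] (H →L[ℂ] H)) (Ω : H) (hΩ : ‖Ω‖ = 1) :
    ((∃ L : Hω →L[ℂ] H,
        (∀ (a : A) (x : Hω), L (πω a x) = π a (L x)) ∧
        L (q 1) = Ω ∧
        (ContinuousLinearMap.adjoint L).comp L = ContinuousLinearMap.id ℂ Hω) ↔
      (∀ a : A, ω a = ⟪Ω, π a Ω⟫_ℂ)) ∧
    (∀ L₁ L₂ : Hω →L[ℂ] H,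
      (∀ (a : A) (x : Hω), L₁ (πω a x) = π a (L₁ x)) → L₁ (q 1) = Ω →
      (ContinuousLinearMap.adjoint L₁).comp L₁ = ContinuousLinearMap.id ℂ Hω →
      (∀ (a : A) (x : Hω), L₂ (πω a x) = π a (L₂ x)) → L₂ (q 1) = Ω →
      (ContinuousLinearMap.adjoint L₂).comp L₂ = ContinuousLinearMap.id ℂ Hω →
      L₁ = L₂) := by
  -- any intertwiner sending q 1 to Ω sends q a to π a Ω
  have key : ∀ L : Hω →L[ℂ] H,
      (∀ (a : A) (x : Hω), L (πω a x) = π a (L x)) → L (q 1) = Ω →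
      ∀ a : A, L (q a) = π a Ω := by
    intro L hint hΩ' a
    have : q a = πω a (q 1) := by rw [hπω, mul_one]
    rw [this, hint, hΩ']
  constructor
  · constructor
    · -- forward direction
      rintro ⟨L, hint, hΩ', hadj⟩ a
      have hLq := key L hint hΩ' a
      have hiso : ∀ x y : Hω, ⟪L x, L y⟫_ℂ = ⟪x, y⟫_ℂ := by
        intro x y
        rw [← ContinuousLinearMap.adjoint_inner_left]
        have hx := congrArg (fun T : Hω →L[ℂ] Hω => T x) hadj
        simp only [ContinuousLinearMap.comp_apply, ContinuousLinearMap.id_apply] at hx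
        rw [hx]
      have h1 : ω a = ⟪q 1, q a⟫_ℂ := by rw [hinner, star_one, one_mul]
      rw [h1, ← hiso (q 1) (q a), hΩ', hLq]
    · -- backward direction: construct L
      intro h
      have hmatch : ∀ a b : A, ⟪π b Ω, π a Ω⟫_ℂ = ⟪q b, q a⟫_ℂ := by
        intro a b
        rw [hinner, h]
        rw [map_mul, map_star, ContinuousLinearMap.star_eq_adjoint]
        rw [ContinuousLinearMap.mul_apply, ContinuousLinearMap.adjoint_inner_right]
      have hnorm : ∀ a : A, ‖π a Ω‖ = ‖q a‖ := by
        intro a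
        have hm := hmatch a a
        rw [inner_self_eq_norm_sq_to_K, inner_self_eq_norm_sq_to_K] at hm
        have h2 : (‖π a Ω‖ : ℝ) ^ 2 = (‖q a‖ : ℝ) ^ 2 := by exact_mod_cast hm
        rw [← Real.sqrt_sq (norm_nonneg (π a Ω)), ← Real.sqrt_sq (norm_nonneg (q a)), h2]
      have hfq : ∀ a b : A, q a = q b → π a Ω = π b Ω := by
        intro a b hab
        have h0 : q (a - b) = 0 := by rw [map_sub, hab, sub_self]
        have h1 : ‖π (a - b) Ω‖ = 0 := by rw [hnorm, h0, norm_zero]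
        have h2 : π (a - b) Ω = 0 := norm_eq_zero.mp h1
        rw [map_sub, ContinuousLinearMap.sub_apply] at h2
        exact sub_eq_zero.mp h2
      set S := LinearMap.range q with hS
      have hc : ∀ x : S, q x.2.choose = (x : Hω) := fun x => x.2.choose_spec
      let g : S →ₗ[ℂ] H :=
        { toFun := fun x => π x.2.choose Ω
          map_add' := by
            intro x y
            show π (x + y).2.choose Ω = π x.2.choose Ω + π y.2.choose Ω
            have : q (x + y).2.choose = q (x.2.choose + y.2.choose) := by
              rw [map_add, hc, hc, hc]; rfl
            rw [hfq _ _ this, map_add, ContinuousLinearMap.add_apply]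
          map_smul' := by
            intro r x
            show π (r • x).2.choose Ω = r • π x.2.choose Ω
            have : q (r • x).2.choose = q (r • x.2.choose) := by
              rw [map_smul, hc, hc]; rfl
            rw [hfq _ _ this, map_smul, ContinuousLinearMap.smul_apply] }
      have hgnorm : ∀ x : S, ‖g x‖ ≤ 1 * ‖x‖ := by
        intro x
        have : ‖g x‖ = ‖(x : Hω)‖ := by
          show ‖π x.2.choose Ω‖ = _
          rw [hnorm, hc]
        rw [this, one_mul]
        rfl
      let gc : S →L[ℂ] H := LinearMap.mkContinuous g 1 hgnorm
      have he_ui : IsUniformInducing (⇑S.subtypeL) := isometry_subtype_coe.isUniformInducing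
      have hd : DenseRange (⇑S.subtypeL) := by
        have : Set.range (⇑S.subtypeL) = Set.range ⇑q := by
          show Set.range (Subtype.val) = _
          rw [Subtype.range_coe]
          exact LinearMap.coe_range q
        rw [DenseRange, this]
        exact hq
      let L : Hω →L[ℂ] H := gc.extend S.subtypeL
      have hL : ∀ a : A, L (q a) = π a Ω := by
        intro a
        have hmem : q a ∈ S := ⟨a, rfl⟩
        have : L (S.subtypeL ⟨q a, hmem⟩) = gc ⟨q a, hmem⟩ :=
          ContinuousLinearMap.extend_eq gc hd he_ui _
        have h2 : gc (⟨q a, hmem⟩ : S) = π (⟨q a, hmem⟩ : S).2.choose Ω := rfl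
        have h3 : q (⟨q a, hmem⟩ : S).2.choose = q a := hc ⟨q a, hmem⟩
        calc L (q a) = L (S.subtypeL ⟨q a, hmem⟩) := rfl
          _ = gc ⟨q a, hmem⟩ := this
          _ = π a Ω := by rw [h2, hfq _ _ h3]
      have hLnorm : ∀ x : Hω, ‖L x‖ = ‖x‖ := by
        have : (fun x : Hω => ‖L x‖) = fun x => ‖x‖ := by
          refine hq.equalizer L.continuous.norm continuous_norm (funext fun a => ?_)
          show ‖L (q a)‖ = ‖q a‖
          rw [hL, hnorm]
        exact fun x => congrFun this x
      let Li : Hω →ₗᵢ[ℂ] H := ⟨(L : Hω →ₗ[ℂ] H), hLnorm⟩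
      refine ⟨L, ?_, ?_, ?_⟩
      · intro a x
        have : (fun x : Hω => L (πω a x)) = fun x => π a (L x) := by
          refine hq.equalizer (L.continuous.comp (πω a).continuous)
            ((π a).continuous.comp L.continuous) (funext fun b => ?_)
          show L (πω a (q b)) = π a (L (q b))
          rw [hπω, hL, hL, map_mul, ContinuousLinearMap.mul_apply]
        exact congrFun this x
      · rw [hL 1, map_one, ContinuousLinearMap.one_apply]
      · apply ContinuousLinearMap.ext
        intro x
        refine ext_inner_right ℂ fun v => ?_
        rw [ContinuousLinearMap.comp_apply, ContinuousLinearMap.id_apply,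
          ContinuousLinearMap.adjoint_inner_left]
        exact Li.inner_map_map x v
  · -- uniqueness
    intro L₁ L₂ h1 h2 _ h4 h5 _
    have e1 := key L₁ h1 h2
    have e2 := key L₂ h4 h5
    have heq := hq.equalizer L₁.continuous L₂.continuous (funext fun a => by simp [e1 a, e2 a])
    exact ContinuousLinearMap.ext fun x => congrFun heq x
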